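/- arXiv:2111.00225 — 2 statements merged into one kernel-verified Lean document; each statement's English description precedes it below -/
import Mathlib

section
/- If the eigenpath φ has order exactly k at 0 (equivalently z^(j)(0) = 0 for j = 1, …, k−1 and z^(k)(0) ≠ 0), then the k vectors W φ(0), W φ'(0), …, W φ^(k−1)(0) are linearly independent in ℋ. Consequently, if W has finite rank, then k ≤ rank(W): an eigenpath cannot have order greater than the rank of W. -/
open ContinuousLinearMap
open Finset
open scoped InnerProductSpace

private lemma an_iter {f : ℂ → ℂ} {s : Set ℂ} (hf : AnalyticOnNhd ℂ f s) (n : ℕ) :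
    AnalyticOnNhd ℂ (iteratedDeriv n f) s := by
  rw [iteratedDeriv_eq_iterate]; exact hf.iterated_deriv n


private lemma leibniz_aux {f g : ℂ → ℂ} {s : Set ℂ} (hs : IsOpen s)
    (hf : AnalyticOnNhd ℂ f s) (hg : AnalyticOnNhd ℂ g s) (n : ℕ) :
    ∀ x ∈ s, iteratedDeriv n (fun y => f y * g y) x
      = ∑ i ∈ range (n+1), (n.choose i : ℂ) * (iteratedDeriv i f x * iteratedDeriv (n-i) g x) := by
  induction n with
  | zero => intro x hx; simp
  | succ n IH =>
    intro x hx
    rw [iteratedDeriv_succ]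
    have heq : (iteratedDeriv n fun y => f y * g y) =ᶠ[nhds x]
        (fun y => ∑ i ∈ range (n+1),
          (n.choose i : ℂ) * (iteratedDeriv i f y * iteratedDeriv (n-i) g y)) := by
      filter_upwards [hs.mem_nhds hx] with y hy using IH y hy
    rw [heq.deriv_eq]
    have hdf : ∀ m, DifferentiableAt ℂ (iteratedDeriv m f) x :=
      fun m => ((an_iter hf m) x hx).differentiableAt
    have hdg : ∀ m, DifferentiableAt ℂ (iteratedDeriv m g) x :=
      fun m => ((an_iter hg m) x hx).differentiableAt
    rw [deriv_fun_sum (fun i _ => by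
      exact (((hdf i).mul (hdg (n-i))).const_mul _))]
    have : ∀ i ∈ range (n+1),
        deriv (fun y => (n.choose i : ℂ) * (iteratedDeriv i f y * iteratedDeriv (n-i) g y)) x
        = (n.choose i : ℂ) * (iteratedDeriv (i+1) f x * iteratedDeriv (n-i) g x)
          + (n.choose i : ℂ) * (iteratedDeriv i f x * iteratedDeriv (n-i+1) g x) := by
      intro i _
      rw [deriv_const_mul _ (by exact (hdf i).mul (hdg (n-i)) :
        DifferentiableAt ℂ (fun y => iteratedDeriv i f y * iteratedDeriv (n-i) g y) x),
        deriv_fun_mul (hdf i) (hdg (n-i))]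
      rw [← iteratedDeriv_succ, ← iteratedDeriv_succ]
      ring
    rw [Finset.sum_congr rfl this, Finset.sum_add_distrib]
    have key := Finset.sum_choose_succ_mul
      (fun i j => iteratedDeriv i f x * iteratedDeriv j g x) n
    rw [key]
    rw [add_comm]
    congr 1
    · apply Finset.sum_congr rfl
      intro i hi
      have h2 : n + 1 - i = n - i + 1 := by
        have := Finset.mem_range.mp hi; omega
      rw [h2]


private lemma clm_iter {F G : Type*} [NormedAddCommGroup F] [NormedSpace ℂ F] [CompleteSpace F]
    [NormedAddCommGroup G] [NormedSpace ℂ G]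
    (T : F →L[ℂ] G) {f : ℂ → F} {s : Set ℂ} (hs : IsOpen s) (hf : AnalyticOnNhd ℂ f s) (n : ℕ) :
    ∀ x ∈ s, iteratedDeriv n (fun y => T (f y)) x = T (iteratedDeriv n f x) := by
  induction n with
  | zero => intro x hx; simp
  | succ n IH =>
    intro x hx
    rw [iteratedDeriv_succ, iteratedDeriv_succ]
    have heq : (iteratedDeriv n fun y => T (f y)) =ᶠ[nhds x]
        (fun y => T (iteratedDeriv n f y)) := by
      filter_upwards [hs.mem_nhds hx] with y hy using IH y hy
    rw [heq.deriv_eq]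
    have hd : AnalyticOnNhd ℂ (iteratedDeriv n f) s := by
      rw [iteratedDeriv_eq_iterate]; exact hf.iterated_deriv n
    have hda := (hd x hx).differentiableAt.hasDerivAt
    exact (T.hasFDerivAt.comp_hasDerivAt x hda).deriv


private lemma conj_hasDerivAt {f : ℂ → ℂ} {d u : ℂ}
    (h : HasDerivAt f d ((starRingEnd ℂ) u)) :
    HasDerivAt (fun x => (starRingEnd ℂ) (f ((starRingEnd ℂ) x))) ((starRingEnd ℂ) d) u := by
  rw [hasDerivAt_iff_tendsto_slope] at h ⊢
  have hmap : Filter.Tendsto (starRingEnd ℂ) (nhdsWithin u {u}ᶜ)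
      (nhdsWithin ((starRingEnd ℂ) u) {(starRingEnd ℂ) u}ᶜ) := by
    apply tendsto_nhdsWithin_of_tendsto_nhds_of_eventually_within
    · exact ((Complex.continuous_conj.tendsto u)).mono_left nhdsWithin_le_nhds
    · filter_upwards [eventually_mem_nhdsWithin] with x hx
      simp only [Set.mem_compl_iff, Set.mem_singleton_iff] at hx ⊢
      exact fun hc => hx (by simpa using congrArg (starRingEnd ℂ) hc)
  have hcomp : Filter.Tendsto
      (fun x => (starRingEnd ℂ) (slope f ((starRingEnd ℂ) u) ((starRingEnd ℂ) x)))
      (nhdsWithin u {u}ᶜ) (nhds ((starRingEnd ℂ) d)) :=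
    (Complex.continuous_conj.tendsto d).comp (h.comp hmap)
  apply hcomp.congr'
  filter_upwards [eventually_mem_nhdsWithin] with x hx
  have hxu : x - u ≠ 0 := sub_ne_zero.mpr hx
  simp only [slope_def_field, map_div₀, map_sub]
  rw [starRingEnd_self_apply, starRingEnd_self_apply]


private lemma star_mem_ball {ρ : ℝ} {u : ℂ} (hu : u ∈ Metric.ball (0:ℂ) ρ) :
    (starRingEnd ℂ) u ∈ Metric.ball (0:ℂ) ρ := by
  simpa [mem_ball_zero_iff] using hu


private lemma conj_analytic {z : ℂ → ℂ} {ρ : ℝ}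
    (hz : AnalyticOnNhd ℂ z (Metric.ball (0:ℂ) ρ)) :
    AnalyticOnNhd ℂ (fun u => (starRingEnd ℂ) (z ((starRingEnd ℂ) u))) (Metric.ball (0:ℂ) ρ) := by
  apply DifferentiableOn.analyticOnNhd _ Metric.isOpen_ball
  intro u hu
  have h := ((hz _ (star_mem_ball hu)).differentiableAt.hasDerivAt)
  exact (conj_hasDerivAt h).differentiableAt.differentiableWithinAt


private lemma conj_iteratedDeriv {z : ℂ → ℂ} {ρ : ℝ}
    (hz : AnalyticOnNhd ℂ z (Metric.ball (0:ℂ) ρ)) (n : ℕ) :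
    ∀ u ∈ Metric.ball (0:ℂ) ρ,
      iteratedDeriv n (fun x => (starRingEnd ℂ) (z ((starRingEnd ℂ) x))) u
        = (starRingEnd ℂ) (iteratedDeriv n z ((starRingEnd ℂ) u)) := by
  induction n with
  | zero => intro u hu; simp
  | succ n IH =>
    intro u hu
    rw [iteratedDeriv_succ, iteratedDeriv_succ]
    have heq : (iteratedDeriv n fun x => (starRingEnd ℂ) (z ((starRingEnd ℂ) x))) =ᶠ[nhds u]
        (fun x => (starRingEnd ℂ) (iteratedDeriv n z ((starRingEnd ℂ) x))) := by
      filter_upwards [Metric.isOpen_ball.mem_nhds hu] with y hy using IH y hy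
    rw [heq.deriv_eq]
    have hd := ((an_iter hz n) _ (star_mem_ball hu)).differentiableAt.hasDerivAt
    exact (conj_hasDerivAt hd).deriv


private lemma iter_const (c : ℂ) (m : ℕ) (hm : 1 ≤ m) (x : ℂ) :
    iteratedDeriv m (fun _ : ℂ => c) x = 0 := by
  obtain ⟨m, rfl⟩ : ∃ m', m = m' + 1 := ⟨m - 1, by omega⟩
  rw [iteratedDeriv_succ']
  have : (deriv fun _ : ℂ => c) = fun _ : ℂ => (0:ℂ) := by
    funext y; simp
  rw [this]
  induction m with
  | zero => simp
  | succ m IH =>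
    rw [iteratedDeriv_succ']
    simpa using IH


private lemma sub_const_iter {f : ℂ → ℂ} (c x : ℂ) {m : ℕ} (hm : 1 ≤ m) :
    iteratedDeriv m (fun v => f v - c) x = iteratedDeriv m f x := by
  obtain ⟨m, rfl⟩ : ∃ m', m = m' + 1 := ⟨m - 1, by omega⟩
  rw [iteratedDeriv_succ', iteratedDeriv_succ']
  congr 1
  funext y
  exact deriv_sub_const c

-- derivatives of (· - u)


private lemma lin_iter (u : ℂ) (m : ℕ) :
    iteratedDeriv m (fun v : ℂ => v - u) 0
      = if m = 0 then (0 - u) else if m = 1 then 1 else 0 := by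
  rcases m with _ | m
  · simp
  rcases m with _ | m
  · rw [iteratedDeriv_one]
    simp [deriv_sub_const]
  · have h1 : iteratedDeriv (m + 2) (fun v : ℂ => v - u) 0
        = iteratedDeriv (m + 1) (deriv fun v : ℂ => v - u) 0 := by
      rw [iteratedDeriv_succ']
    have h2 : (deriv fun v : ℂ => v - u) = fun _ : ℂ => (1:ℂ) := by
      funext y; simp [deriv_sub_const]
    rw [h1, h2, iter_const 1 (m+1) (by omega)]
    simp


private lemma lin_mul_iter {g : ℂ → ℂ} {s : Set ℂ} (hs : IsOpen s)
    (hg : AnalyticOnNhd ℂ g s) (h0 : (0:ℂ) ∈ s) (u : ℂ) (j : ℕ) :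
    iteratedDeriv j (fun v => (v - u) * g v) 0
      = (0 - u) * iteratedDeriv j g 0 + (j:ℂ) * iteratedDeriv (j-1) g 0 := by
  have hf : AnalyticOnNhd ℂ (fun v : ℂ => v - u) s := fun x _ =>
    analyticAt_id.sub analyticAt_const
  rw [leibniz_aux hs hf hg j 0 h0]
  rcases j with _ | j
  · simp [lin_iter]
  rw [Finset.sum_range_succ', Finset.sum_range_succ']
  have hzero : ∀ m, iteratedDeriv (m + 2) (fun v : ℂ => v - u) 0 = 0 := by
    intro m; rw [lin_iter]; simp
  have : ∀ m ∈ range j, ((j+1).choose (m+2) : ℂ) *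
      (iteratedDeriv (m+2) (fun v : ℂ => v - u) 0 * iteratedDeriv (j+1-(m+2)) g 0) = 0 := by
    intro m _; rw [hzero m]; ring
  rw [Finset.sum_congr rfl this, Finset.sum_const_zero]
  rw [lin_iter, lin_iter]
  simp only [if_pos rfl, if_neg (Nat.one_ne_zero), if_pos rfl]
  push_cast
  ring_nf
  simp [Nat.choose_one_right]
  ring


private lemma van_mul_iter₁ {f g : ℂ → ℂ} {s : Set ℂ} (hs : IsOpen s)
    (hf : AnalyticOnNhd ℂ f s) (hg : AnalyticOnNhd ℂ g s) (h0 : (0:ℂ) ∈ s) (j : ℕ)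
    (hvan : ∀ m, 1 ≤ m → m ≤ j → iteratedDeriv m f 0 = 0) :
    iteratedDeriv j (fun y => f y * g y) 0 = f 0 * iteratedDeriv j g 0 := by
  rw [leibniz_aux hs hf hg j 0 h0, Finset.sum_eq_single 0]
  · simp
  · intro m hm hm0
    rw [hvan m (by omega) (by have := Finset.mem_range.mp hm; omega)]
    ring
  · intro h; exact absurd (Finset.mem_range.mpr (by omega)) h


private lemma van_mul_iter₂ {f g : ℂ → ℂ} {s : Set ℂ} (hs : IsOpen s)
    (hf : AnalyticOnNhd ℂ f s) (hg : AnalyticOnNhd ℂ g s) (h0 : (0:ℂ) ∈ s) (j : ℕ)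
    (hvan : ∀ m, m < j → iteratedDeriv m f 0 = 0) :
    iteratedDeriv j (fun y => f y * g y) 0 = iteratedDeriv j f 0 * g 0 := by
  rw [leibniz_aux hs hf hg j 0 h0, Finset.sum_eq_single j]
  · simp
  · intro m hm hmj
    rw [hvan m (by have := Finset.mem_range.mp hm; omega)]
    ring
  · intro h; exact absurd (Finset.mem_range.mpr (by omega)) h


private lemma iter_add {f g : ℂ → ℂ} {s : Set ℂ} (hs : IsOpen s)
    (hf : AnalyticOnNhd ℂ f s) (hg : AnalyticOnNhd ℂ g s) (n : ℕ) :
    ∀ x ∈ s, iteratedDeriv n (fun y => f y + g y) x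
      = iteratedDeriv n f x + iteratedDeriv n g x := by
  induction n with
  | zero => intro x hx; simp
  | succ n IH =>
    intro x hx
    rw [iteratedDeriv_succ, iteratedDeriv_succ, iteratedDeriv_succ]
    have heq : (iteratedDeriv n fun y => f y + g y) =ᶠ[nhds x]
        (fun y => iteratedDeriv n f y + iteratedDeriv n g y) := by
      filter_upwards [hs.mem_nhds hx] with y hy using IH y hy
    rw [heq.deriv_eq]
    exact deriv_add ((an_iter hf n x hx).differentiableAt)
      ((an_iter hg n x hx).differentiableAt)


private lemma iter_cmul {f : ℂ → ℂ} {s : Set ℂ} (hs : IsOpen s)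
    (hf : AnalyticOnNhd ℂ f s) (c : ℂ) (n : ℕ) :
    ∀ x ∈ s, iteratedDeriv n (fun y => c * f y) x = c * iteratedDeriv n f x := by
  induction n with
  | zero => intro x hx; simp
  | succ n IH =>
    intro x hx
    rw [iteratedDeriv_succ, iteratedDeriv_succ]
    have heq : (iteratedDeriv n fun y => c * f y) =ᶠ[nhds x]
        (fun y => c * iteratedDeriv n f y) := by
      filter_upwards [hs.mem_nhds hx] with y hy using IH y hy
    rw [heq.deriv_eq]
    exact deriv_const_mul c ((an_iter hf n x hx).differentiableAt)


private lemma nat_succ_ne_zero_complex (j : ℕ) : ((j:ℂ) + 1) ≠ 0 := by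
  have : ((j+1 : ℕ) : ℂ) ≠ 0 := Nat.cast_ne_zero.mpr (Nat.succ_ne_zero j)
  push_cast at this; exact this


private lemma matrix_arg {k : ℕ} (hk : 1 ≤ k) (b : ℕ → ℕ → ℂ)
    (hrel : ∀ i j, i ≤ k-1 → j ≤ k-1 → (i:ℂ) * b (i-1) j = (j:ℂ) * b i (j-1))
    (hbase : b (k-1) 0 ≠ 0)
    (c : Fin k → ℂ)
    (hsum : ∀ i, i ≤ k-1 → ∑ j : Fin k, c j * b i (j:ℕ) = 0) :
    ∀ j, c j = 0 := by
  have hZ : ∀ i j, i + j + 2 ≤ k → b i j = 0 := by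
    intro i
    induction i with
    | zero =>
      intro j hj
      have h := hrel 0 (j+1) (by omega) (by omega)
      simp only [Nat.cast_zero, zero_mul, Nat.cast_add, Nat.cast_one, Nat.add_sub_cancel] at h
      rcases mul_eq_zero.mp h.symm with h' | h'
      · exact absurd h' (nat_succ_ne_zero_complex j)
      · exact h'
    | succ i IH =>
      intro j hj
      have h := hrel (i+1) (j+1) (by omega) (by omega)
      have h0 : b i (j+1) = 0 := IH (j+1) (by omega)
      simp only [Nat.add_sub_cancel, h0, mul_zero] at h
      rcases mul_eq_zero.mp h.symm with h' | h'
      · exact absurd (by exact_mod_cast h') (nat_succ_ne_zero_complex j)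
      · exact h'
  have hD : ∀ t, t ≤ k-1 → b (k-1-t) t ≠ 0 := by
    intro t
    induction t with
    | zero => intro _; simpa using hbase
    | succ t IH =>
      intro ht
      have h := hrel (k-1-t) (t+1) (by omega) (by omega)
      simp only [Nat.add_sub_cancel] at h
      have hne : ((k-1-t : ℕ) : ℂ) ≠ 0 := Nat.cast_ne_zero.mpr (by omega)
      have hrhs : ((t:ℂ)+1) * b (k-1-t) t ≠ 0 := by
        apply mul_ne_zero (nat_succ_ne_zero_complex t) (IH (by omega))
      have hlhs : ((k-1-t:ℕ):ℂ) * b (k-1-t-1) (t+1) ≠ 0 := by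
        rw [h]; exact_mod_cast hrhs
      have : b (k-1-t-1) (t+1) ≠ 0 := fun hc => hlhs (by rw [hc, mul_zero])
      have he : k-1-(t+1) = k-1-t-1 := by omega
      rw [he]; exact this
  have main : ∀ m, m ≤ k → ∀ j : Fin k, k - m ≤ (j:ℕ) → c j = 0 := by
    intro m
    induction m with
    | zero => intro _ j hj; exact absurd j.isLt (by omega)
    | succ m IH =>
      intro hm j hj
      by_cases hcase : k - m ≤ (j:ℕ)
      · exact IH (by omega) j hcase
      · have hjv : (j:ℕ) = k - m - 1 := by omega
        have hi : k - 1 - (j:ℕ) ≤ k - 1 := by omega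
        have h := hsum (k-1-(j:ℕ)) hi
        rw [Fintype.sum_eq_single j] at h
        · rcases mul_eq_zero.mp h with h' | h'
          · exact h'
          · exact absurd h' (hD (j:ℕ) (by omega))
        · intro j' hj'
          have hne : (j':ℕ) ≠ (j:ℕ) := fun hc => hj' (Fin.ext hc)
          rcases lt_or_gt_of_ne hne with hlt | hgt
          · have : b (k-1-(j:ℕ)) (j':ℕ) = 0 := hZ _ _ (by omega)
            rw [this, mul_zero]
          · have : c j' = 0 := IH (by omega) j' (by omega)
            rw [this, zero_mul]
  intro j
  exact main k le_rfl j (by omega)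


/-- if the eigenpath `φ` has order exactly `k` at `0` (equivalently
`z^(j)(0) = 0` for `j = 1, …, k-1` and `z^(k)(0) ≠ 0`), then the vectors
`W φ(0), W φ'(0), …, W φ^(k-1)(0)` are linearly independent; consequently, if `W` has
finite rank, then `k ≤ rank W`. -/
theorem order_le_rank_of_perturbation
    {H : Type*} [NormedAddCommGroup H] [InnerProductSpace ℂ H] [CompleteSpace H]
    (N₀ W : H →L[ℂ] H) (hW : IsSelfAdjoint W)
    (z₀ : ℂ) (r : ℝ) (hr : 0 < r)
    (R : ℂ → (H →L[ℂ] H))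
    (hR : ∀ v : ℂ, v ≠ 0 → ‖v‖ ≤ r →
      (N₀ + v • W - z₀ • (1 : H →L[ℂ] H)) * R v = 1 ∧
      R v * (N₀ + v • W - z₀ • (1 : H →L[ℂ] H)) = 1)
    (ρ : ℝ) (hρ : 0 < ρ)
    (z : ℂ → ℂ) (φ : ℂ → H)
    (hz : AnalyticOnNhd ℂ z (Metric.ball (0 : ℂ) ρ))
    (hφ : AnalyticOnNhd ℂ φ (Metric.ball (0 : ℂ) ρ))
    (heig : ∀ v ∈ Metric.ball (0 : ℂ) ρ, (N₀ + v • W) (φ v) = z v • φ v)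
    (hφ0 : φ 0 ≠ 0) (hz0 : z 0 = z₀)
    -- the conjugate eigenpath `φ*(v) = ψ(conj v)` with `ψ` analytic
    (ψ : ℂ → H) (hψ : AnalyticOnNhd ℂ ψ (Metric.ball (0 : ℂ) ρ))
    (heigψ : ∀ v ∈ Metric.ball (0 : ℂ) ρ,
      adjoint (N₀ + v • W) (ψ ((starRingEnd ℂ) v)) =
        (starRingEnd ℂ) (z v) • ψ ((starRingEnd ℂ) v))
    (hpair : ⟪ψ 0, φ 0⟫_ℂ ≠ 0)
    (k : ℕ) (hk : 1 ≤ k)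
    -- `φ` has order exactly `k` at `0`
    (horder : (∀ j : ℕ, 1 ≤ j → j < k → iteratedDeriv j z 0 = 0) ∧
      iteratedDeriv k z 0 ≠ 0) :
    LinearIndependent ℂ (fun j : Fin k => W (iteratedDeriv (j : ℕ) φ 0)) ∧
    (∀ _ : FiniteDimensional ℂ (LinearMap.range (W : H →ₗ[ℂ] H)),
      k ≤ Module.finrank ℂ (LinearMap.range (W : H →ₗ[ℂ] H))) := by
  have hs : IsOpen (Metric.ball (0:ℂ) ρ) := Metric.isOpen_ball
  have h0s : (0:ℂ) ∈ Metric.ball (0:ℂ) ρ := Metric.mem_ball_self hρ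
  set φd : ℕ → H := fun j => iteratedDeriv j φ 0 with hφd_def
  set ψd : ℕ → H := fun i => iteratedDeriv i ψ 0 with hψd_def
  -- Step A : basic two-variable identity
  have hA : ∀ u ∈ Metric.ball (0:ℂ) ρ, ∀ v ∈ Metric.ball (0:ℂ) ρ,
      (v - u) * ⟪ψ ((starRingEnd ℂ) u), W (φ v)⟫_ℂ
        = (z v - z u) * ⟪ψ ((starRingEnd ℂ) u), φ v⟫_ℂ := by
    intro u hu v hv
    set x := ψ ((starRingEnd ℂ) u) with hx_def
    have h1 : ⟪x, (N₀ + v • W) (φ v)⟫_ℂ = z v * ⟪x, φ v⟫_ℂ := by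
      rw [heig v hv, inner_smul_right]
    have h2 : ⟪x, (N₀ + u • W) (φ v)⟫_ℂ = z u * ⟪x, φ v⟫_ℂ := by
      rw [← ContinuousLinearMap.adjoint_inner_left, heigψ u hu, inner_smul_left]
      simp [hx_def]
    have h3 : ⟪x, (N₀ + v • W) (φ v)⟫_ℂ - ⟪x, (N₀ + u • W) (φ v)⟫_ℂ
        = (v - u) * ⟪x, W (φ v)⟫_ℂ := by
      rw [← inner_sub_right]
      have he : (N₀ + v • W) (φ v) - (N₀ + u • W) (φ v) = (v - u) • (W (φ v)) := by
        simp only [ContinuousLinearMap.add_apply, ContinuousLinearMap.coe_smul',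
          Pi.smul_apply, sub_smul]
        abel
      rw [he, inner_smul_right]
    rw [h1, h2] at h3
    rw [← h3]; ring
  -- Step B : differentiate j times in v at 0
  have hId : ∀ j, j ≤ k-1 → ∀ u ∈ Metric.ball (0:ℂ) ρ,
      (0 - u) * ⟪ψ ((starRingEnd ℂ) u), W (φd j)⟫_ℂ
        + (j:ℂ) * ⟪ψ ((starRingEnd ℂ) u), W (φd (j-1))⟫_ℂ
      = (z 0 - z u) * ⟪ψ ((starRingEnd ℂ) u), φd j⟫_ℂ := by
    intro j hj u hu
    set x := ψ ((starRingEnd ℂ) u) with hx_def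
    have hgan : AnalyticOnNhd ℂ (fun v => ⟪x, W (φ v)⟫_ℂ) (Metric.ball (0:ℂ) ρ) := by
      have := ((innerSL ℂ x).comp W).comp_analyticOnNhd hφ
      simpa [Function.comp_def] using this
    have hGan : AnalyticOnNhd ℂ (fun v => ⟪x, φ v⟫_ℂ) (Metric.ball (0:ℂ) ρ) := by
      have := (innerSL ℂ x).comp_analyticOnNhd hφ
      simpa [Function.comp_def] using this
    have heq : (fun v => (v - u) * ⟪x, W (φ v)⟫_ℂ) =ᶠ[nhds 0]
        (fun v => (z v - z u) * ⟪x, φ v⟫_ℂ) := by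
      filter_upwards [hs.mem_nhds h0s] with v hv using hA u hu v hv
    have hL := heq.iteratedDeriv_eq j
    rw [lin_mul_iter hs hgan h0s u j] at hL
    have hzan : AnalyticOnNhd ℂ (fun v => z v - z u) (Metric.ball (0:ℂ) ρ) :=
      hz.sub analyticOnNhd_const
    have hvan : ∀ m, 1 ≤ m → m ≤ j → iteratedDeriv m (fun v => z v - z u) 0 = 0 := by
      intro m h1m hmj
      rw [sub_const_iter (z u) 0 h1m]
      exact horder.1 m h1m (by omega)
    rw [van_mul_iter₁ hs hzan hGan h0s j hvan] at hL
    have e1 : ∀ m, iteratedDeriv m (fun v => ⟪x, W (φ v)⟫_ℂ) 0 = ⟪x, W (φd m)⟫_ℂ := by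
      intro m
      have := clm_iter ((innerSL ℂ x).comp W) hs hφ m 0 h0s
      simpa [Function.comp] using this
    have e2 : iteratedDeriv j (fun v => ⟪x, φ v⟫_ℂ) 0 = ⟪x, φd j⟫_ℂ := by
      have := clm_iter (innerSL ℂ x) hs hφ j 0 h0s
      simpa [Function.comp] using this
    rw [e1, e1, e2] at hL
    exact hL
  -- Step C : conjugated identity, analytic in u
  have hIdC : ∀ j, j ≤ k-1 → ∀ u ∈ Metric.ball (0:ℂ) ρ,
      (j:ℂ) * ⟪W (φd (j-1)), ψ u⟫_ℂ + (-1:ℂ) * ((u - 0) * ⟪W (φd j), ψ u⟫_ℂ)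
      = ((starRingEnd ℂ) (z 0) - (starRingEnd ℂ) (z ((starRingEnd ℂ) u))) * ⟪φd j, ψ u⟫_ℂ := by
    intro j hj u hu
    have h := congrArg (starRingEnd ℂ) (hId j hj ((starRingEnd ℂ) u) (star_mem_ball hu))
    simp only [map_add, map_mul, map_sub, map_zero, map_natCast, inner_conj_symm,
      Complex.conj_conj] at h
    linear_combination h
  -- the pairing matrix
  set b : ℕ → ℕ → ℂ := fun i j => ⟪W (φd j), ψd i⟫_ℂ with hb_def
  -- analyticity of the u-functions
  have hFan : ∀ x : H, AnalyticOnNhd ℂ (fun u => ⟪x, ψ u⟫_ℂ) (Metric.ball (0:ℂ) ρ) := by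
    intro x
    have := (innerSL ℂ x).comp_analyticOnNhd hψ
    simpa [Function.comp_def] using this
  have hFiter : ∀ (x : H) (i : ℕ), iteratedDeriv i (fun u => ⟪x, ψ u⟫_ℂ) 0 = ⟪x, ψd i⟫_ℂ := by
    intro x i
    have := clm_iter (innerSL ℂ x) hs hψ i 0 h0s
    simpa [Function.comp] using this
  -- the analytic function (star z₀ - ζ u) and its derivatives
  set f0 : ℂ → ℂ := fun u => (starRingEnd ℂ) (z 0) - (starRingEnd ℂ) (z ((starRingEnd ℂ) u))
    with hf0_def
  have hf0an : AnalyticOnNhd ℂ f0 (Metric.ball (0:ℂ) ρ) :=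
    analyticOnNhd_const.sub (conj_analytic hz)
  have hf00 : f0 0 = 0 := by simp [hf0_def]
  have hf0d : ∀ m, 1 ≤ m → iteratedDeriv m f0 0
      = -((starRingEnd ℂ) (iteratedDeriv m z 0)) := by
    intro m hm
    have hrw : f0 = fun u => -((fun u => (starRingEnd ℂ) (z ((starRingEnd ℂ) u))) u
        - (starRingEnd ℂ) (z 0)) := by
      funext u; simp [hf0_def, neg_sub]
    rw [hrw, iteratedDeriv_fun_neg, sub_const_iter _ 0 hm, conj_iteratedDeriv hz m 0 h0s, map_zero]
  -- derive the relations by differentiating i times in u at 0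
  have hDer : ∀ i j, j ≤ k-1 →
      (j:ℂ) * b i (j-1) - (i:ℂ) * b (i-1) j = iteratedDeriv i (fun u => f0 u * ⟪φd j, ψ u⟫_ℂ) 0 := by
    intro i j hj
    have hFprod : AnalyticOnNhd ℂ (fun u : ℂ => (u - 0) * ⟪W (φd j), ψ u⟫_ℂ)
        (Metric.ball (0:ℂ) ρ) := by
      exact ((analyticOnNhd_id.sub analyticOnNhd_const).mul (hFan _))
    have hFjm : AnalyticOnNhd ℂ (fun u : ℂ => (j:ℂ) * ⟪W (φd (j-1)), ψ u⟫_ℂ)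
        (Metric.ball (0:ℂ) ρ) := by
      exact analyticOnNhd_const.mul (hFan _)
    have hlin : AnalyticOnNhd ℂ (fun u : ℂ => (-1:ℂ) * ((u - 0) * ⟪W (φd j), ψ u⟫_ℂ))
        (Metric.ball (0:ℂ) ρ) := by
      exact analyticOnNhd_const.mul hFprod
    have heq : (fun u => (j:ℂ) * ⟪W (φd (j-1)), ψ u⟫_ℂ
          + (-1:ℂ) * ((u - 0) * ⟪W (φd j), ψ u⟫_ℂ)) =ᶠ[nhds 0]
        (fun u => f0 u * ⟪φd j, ψ u⟫_ℂ) := by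
      filter_upwards [hs.mem_nhds h0s] with u hu using hIdC j hj u hu
    have hD := heq.iteratedDeriv_eq i
    rw [iter_add hs hFjm hlin i 0 h0s, iter_cmul hs (hFan (W (φd (j-1)))) ((j:ℂ)) i 0 h0s,
      iter_cmul hs hFprod (-1:ℂ) i 0 h0s,
      lin_mul_iter hs (hFan (W (φd j))) h0s 0 i, hFiter, hFiter, hFiter] at hD
    rw [← hD]
    simp [hb_def]
    ring
  have hrel : ∀ i j, i ≤ k-1 → j ≤ k-1 → (i:ℂ) * b (i-1) j = (j:ℂ) * b i (j-1) := by
    intro i j hi hj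
    have h := hDer i j hj
    have hvan : ∀ m, 1 ≤ m → m ≤ i → iteratedDeriv m f0 0 = 0 := by
      intro m h1m hmi
      rw [hf0d m h1m, horder.1 m h1m (by omega), map_zero, neg_zero]
    rw [van_mul_iter₁ hs hf0an (hFan _) h0s i hvan, hf00, zero_mul] at h
    linear_combination -h
  have hbase : b (k-1) 0 ≠ 0 := by
    have h := hDer k 0 (by omega)
    have hvan : ∀ m, m < k → iteratedDeriv m f0 0 = 0 := by
      intro m hm
      rcases Nat.eq_zero_or_pos m with h0 | h1
      · subst h0; simpa using hf00
      · rw [hf0d m h1, horder.1 m h1 hm, map_zero, neg_zero]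
    rw [van_mul_iter₂ hs hf0an (hFan _) h0s k hvan, hf0d k hk] at h
    have hzk : (starRingEnd ℂ) (iteratedDeriv k z 0) ≠ 0 := by
      simpa using horder.2
    have hφ00 : φd 0 = φ 0 := by simp [hφd_def]
    have hψ00 : ψd 0 = ψ 0 := by simp [hψd_def]
    have hφψ : ⟪φd 0, ψ 0⟫_ℂ ≠ 0 := by
      rw [hφ00]
      intro hc
      apply hpair
      rw [← inner_conj_symm, hc, map_zero]
    intro hb0
    rw [hb0] at h
    simp only [Nat.cast_zero, zero_mul, mul_zero, sub_zero, zero_sub, neg_mul] at h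
    have : (starRingEnd ℂ) (iteratedDeriv k z 0) * ⟪φd 0, ψ 0⟫_ℂ = 0 := by
      linear_combination h
    exact (mul_ne_zero hzk hφψ) this
  -- linear independence
  have key : ∀ g : Fin k → ℂ, (∑ j, g j • W (φd (j:ℕ))) = 0 → ∀ j, g j = 0 := by
    intro g hg j
    have hsum : ∀ i, i ≤ k-1 → ∑ j' : Fin k, (starRingEnd ℂ) (g j') * b i (j':ℕ) = 0 := by
      intro i hi
      have h0 : ⟪∑ j' : Fin k, g j' • W (φd (j':ℕ)), ψd i⟫_ℂ = 0 := by
        rw [hg, inner_zero_left]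
      rw [sum_inner] at h0
      simpa [inner_smul_left, hb_def] using h0
    have hstar := matrix_arg hk b hrel hbase (fun j' => (starRingEnd ℂ) (g j')) hsum j
    have : star (g j) = 0 := hstar
    exact star_eq_zero.mp this
  have li : LinearIndependent ℂ (fun j : Fin k => W (iteratedDeriv (j : ℕ) φ 0)) := by
    rw [Fintype.linearIndependent_iff]
    intro g hg j
    exact key g (by simpa [hφd_def] using hg) j
  refine ⟨li, ?_⟩
  intro hfd
  haveI := hfd
  have liv : LinearIndependent ℂ
      (fun j : Fin k => (⟨W (φd (j:ℕ)), LinearMap.mem_range_self (W : H →ₗ[ℂ] H) _⟩ : LinearMap.range (W : H →ₗ[ℂ] H))) := by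
    apply LinearIndependent.of_comp (LinearMap.range (W : H →ₗ[ℂ] H)).subtype
    simpa [hφd_def, Function.comp_def] using li
  simpa using liv.fintype_card_le_finrank
end

section
/- Let k ≥ 2, let c₂, …, c_{k−1} ∈ ℂ, and let N(v) = N₀ + vW + Σ_{j=2}^{k−1} c_j v^j W + v^k M(v), where M is an analytic function from an open disc D centred at 0 into the bounded operators on ℋ (so N is a resonant path tangent to the direction W at N₀ to order at least k). Let χ : D → ℋ be analytic with χ(v) ≠ 0 and N(v) χ(v) = z₀ χ(v) for all v ∈ D. Then: (1) for l = 1, …, k the vector χ^(l−1)(0) is a resonance vector of order exactly l, i.e. (1 − v R(v) W)^l χ^(l−1)(0) = 0 and (1 − v R(v) W)^(l−1) χ^(l−1)(0) ≠ 0 for every v with 0 < |v| ≤ r; (2) for l = 1, …, k, A χ^(l−1)(0) = (l−1) χ^(l−2)(0) + Σ_{j=2}^{l−1} j!·binom(l−1, j)·c_j·χ^(l−1−j)(0); (3) χ(0) has depth at least k−1: χ(0) ∈ range(A^(k−1)). -/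
set_option linter.unusedSectionVars false
set_option maxHeartbeats 2000000
open Complex MeasureTheory ContinuousLinearMap Topology
open scoped InnerProductSpace

section resAux

variable {H : Type*} [NormedAddCommGroup H] [NormedSpace ℂ H] [CompleteSpace H]

lemma res_analyticOnNhd_iteratedDeriv {f : ℂ → H} {s : Set ℂ}
    (hf : AnalyticOnNhd ℂ f s) (n : ℕ) : AnalyticOnNhd ℂ (iteratedDeriv n f) s := by
  rw [iteratedDeriv_eq_iterate]; exact hf.iterated_deriv n

lemma res_iteratedDeriv_zero_fun (n : ℕ) (x : ℂ) :
    iteratedDeriv n (fun _ : ℂ => (0 : H)) x = 0 := by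
  rw [iteratedDeriv_eq_iterate]
  have : deriv^[n] (fun _ : ℂ => (0 : H)) = fun _ => (0 : H) := by
    induction n with
    | zero => rfl
    | succ n IHn => rw [Function.iterate_succ_apply', IHn]; ext y; simp
  rw [this]

lemma res_iteratedDeriv_clm_comp (T : H →L[ℂ] H) {f : ℂ → H} {s : Set ℂ} (hs : IsOpen s)
    (hf : AnalyticOnNhd ℂ f s) (n : ℕ) : ∀ x ∈ s,
    iteratedDeriv n (fun v => T (f v)) x = T (iteratedDeriv n f x) := by
  induction n with
  | zero => intro x hx; simp
  | succ n IH =>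
    intro x hx
    rw [iteratedDeriv_succ]
    have h1 : iteratedDeriv n (fun v => T (f v)) =ᶠ[𝓝 x] fun y => T (iteratedDeriv n f y) :=
      Filter.eventuallyEq_of_mem (hs.mem_nhds hx) (fun y hy => IH y hy)
    rw [h1.deriv_eq]
    have hd : HasDerivAt (iteratedDeriv n f) (iteratedDeriv (n + 1) f x) x := by
      have := ((res_analyticOnNhd_iteratedDeriv hf n) x hx).differentiableAt.hasDerivAt
      rwa [iteratedDeriv_succ]
    exact (T.hasFDerivAt.comp_hasDerivAt x hd).deriv

lemma res_iteratedDeriv_const_smul (d : ℂ) {f : ℂ → H} {s : Set ℂ} (hs : IsOpen s)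
    (hf : AnalyticOnNhd ℂ f s) (n : ℕ) : ∀ x ∈ s,
    iteratedDeriv n (fun v => d • f v) x = d • iteratedDeriv n f x := by
  induction n with
  | zero => intro x hx; simp
  | succ n IH =>
    intro x hx
    rw [iteratedDeriv_succ]
    have h1 : iteratedDeriv n (fun v => d • f v) =ᶠ[𝓝 x] fun y => d • iteratedDeriv n f y :=
      Filter.eventuallyEq_of_mem (hs.mem_nhds hx) (fun y hy => IH y hy)
    rw [h1.deriv_eq, deriv_fun_const_smul d ((res_analyticOnNhd_iteratedDeriv hf n) x hx).differentiableAt,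
      ← iteratedDeriv_succ]

lemma res_iteratedDeriv_add {f g : ℂ → H} {s : Set ℂ} (hs : IsOpen s)
    (hf : AnalyticOnNhd ℂ f s) (hg : AnalyticOnNhd ℂ g s) (n : ℕ) : ∀ x ∈ s,
    iteratedDeriv n (fun v => f v + g v) x = iteratedDeriv n f x + iteratedDeriv n g x := by
  induction n with
  | zero => intro x hx; simp
  | succ n IH =>
    intro x hx
    rw [iteratedDeriv_succ]
    have h1 : iteratedDeriv n (fun v => f v + g v)
        =ᶠ[𝓝 x] fun y => iteratedDeriv n f y + iteratedDeriv n g y :=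
      Filter.eventuallyEq_of_mem (hs.mem_nhds hx) (fun y hy => IH y hy)
    rw [h1.deriv_eq, deriv_fun_add ((res_analyticOnNhd_iteratedDeriv hf n) x hx).differentiableAt
      ((res_analyticOnNhd_iteratedDeriv hg n) x hx).differentiableAt,
      ← iteratedDeriv_succ, ← iteratedDeriv_succ]

lemma res_iteratedDeriv_finsum {ι : Type*} (t : Finset ι) (F : ι → ℂ → H) {s : Set ℂ}
    (hs : IsOpen s) (hF : ∀ i ∈ t, AnalyticOnNhd ℂ (F i) s) (n : ℕ) : ∀ x ∈ s,
    iteratedDeriv n (fun v => ∑ i ∈ t, F i v) x = ∑ i ∈ t, iteratedDeriv n (F i) x := by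
  classical
  induction t using Finset.induction with
  | empty =>
    intro x hx
    simp only [Finset.sum_empty]
    exact res_iteratedDeriv_zero_fun n x
  | insert i t' hnot IH =>
    intro x hx
    have hFi := hF i (Finset.mem_insert_self i t')
    have hFt : ∀ j ∈ t', AnalyticOnNhd ℂ (F j) s :=
      fun j hj => hF j (Finset.mem_insert_of_mem hj)
    have hsum : AnalyticOnNhd ℂ (fun v => ∑ i ∈ t', F i v) s := by
      intro y hy
      exact Finset.analyticAt_fun_sum t' (fun j hj => hFt j hj y hy)
    simp only [Finset.sum_insert hnot]
    rw [res_iteratedDeriv_add hs hFi hsum n x hx, IH hFt x hx]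

lemma res_iteratedDeriv_id_smul {f : ℂ → H} {s : Set ℂ} (hs : IsOpen s)
    (hf : AnalyticOnNhd ℂ f s) (n : ℕ) : ∀ x ∈ s,
    iteratedDeriv n (fun v => v • f v) x
      = x • iteratedDeriv n f x + ((n : ℂ)) • iteratedDeriv (n - 1) f x := by
  induction n with
  | zero => intro x hx; simp
  | succ n IH =>
    intro x hx
    rw [iteratedDeriv_succ]
    have h1 : iteratedDeriv n (fun v => v • f v)
        =ᶠ[𝓝 x] fun y => y • iteratedDeriv n f y + ((n : ℂ)) • iteratedDeriv (n - 1) f y :=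
      Filter.eventuallyEq_of_mem (hs.mem_nhds hx) (fun y hy => IH y hy)
    rw [h1.deriv_eq]
    have hdn : DifferentiableAt ℂ (iteratedDeriv n f) x :=
      ((res_analyticOnNhd_iteratedDeriv hf n) x hx).differentiableAt
    have hdn1 : DifferentiableAt ℂ (iteratedDeriv (n - 1) f) x :=
      ((res_analyticOnNhd_iteratedDeriv hf (n - 1)) x hx).differentiableAt
    have hd1 : DifferentiableAt ℂ (fun y : ℂ => y • iteratedDeriv n f y) x :=
      differentiableAt_fun_id.smul hdn
    have hd2 : DifferentiableAt ℂ (fun y : ℂ => ((n : ℂ)) • iteratedDeriv (n - 1) f y) x :=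
      hdn1.const_smul _
    rw [deriv_fun_add hd1 hd2, deriv_fun_smul differentiableAt_fun_id hdn, deriv_fun_const_smul _ hdn1]
    rw [deriv_id'']
    cases n with
    | zero => simp
    | succ m =>
      have : deriv (iteratedDeriv (m + 1 - 1) f) x = iteratedDeriv (m + 1) f x := by
        rw [Nat.add_sub_cancel, ← iteratedDeriv_succ]
      rw [this, ← iteratedDeriv_succ, Nat.add_sub_cancel]
      push_cast
      module

lemma res_iteratedDeriv_monomial (j : ℕ) : ∀ {f : ℂ → H} {s : Set ℂ}, IsOpen s → (0 : ℂ) ∈ s →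
    AnalyticOnNhd ℂ f s → ∀ m : ℕ,
    iteratedDeriv m (fun v => v ^ j • f v) 0
      = if j ≤ m then ((m.choose j * j.factorial : ℕ) : ℂ) • iteratedDeriv (m - j) f 0
        else 0 := by
  induction j with
  | zero =>
    intro f s hs h0 hf m
    simp
  | succ j IH =>
    intro f s hs h0 hf m
    have hg : AnalyticOnNhd ℂ (fun v => v • f v) s :=
      AnalyticOnNhd.smul analyticOnNhd_id hf
    have h1 : (fun v : ℂ => v ^ (j + 1) • f v) = fun v => v ^ j • ((fun w : ℂ => w • f w) v) := by
      funext v; rw [pow_succ, mul_smul]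
    rw [h1, IH hs h0 hg m]
    by_cases hjm : j ≤ m
    · rw [if_pos hjm, res_iteratedDeriv_id_smul hs hf (m - j) 0 h0, zero_smul, zero_add,
        smul_smul]
      by_cases hjm1 : j + 1 ≤ m
      · rw [if_pos hjm1]
        have h2 : m.choose (j + 1) * (j + 1) = m.choose j * (m - j) :=
          Nat.choose_succ_right_eq m j
        have hnat : m.choose j * j.factorial * (m - j) = m.choose (j + 1) * (j + 1).factorial := by
          calc m.choose j * j.factorial * (m - j)
              = (m.choose j * (m - j)) * j.factorial := by ring
            _ = (m.choose (j + 1) * (j + 1)) * j.factorial := by rw [h2]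
            _ = m.choose (j + 1) * (j + 1).factorial := by
                rw [Nat.factorial_succ]; ring
        rw [← Nat.cast_mul, hnat, Nat.sub_sub]
      · rw [if_neg hjm1]
        have : m - j = 0 := by omega
        rw [this]
        simp
    · rw [if_neg hjm, if_neg (by omega : ¬ j + 1 ≤ m)]

lemma res_circleIntegral_apply {g : ℂ → (H →L[ℂ] H)} {r : ℝ}
    (hg : CircleIntegrable g 0 r) (x : H) :
    (∮ v in C(0, r), g v) x = ∮ v in C(0, r), (g v) x := by
  have hg' := (circleIntegrable_iff (f := g) (c := 0) r).mp hg
  have h := (ContinuousLinearMap.apply ℂ H x).intervalIntegral_comp_comm hg'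
  simp only [circleIntegral]
  have e1 : (∫ θ in (0:ℝ)..2 * Real.pi, deriv (circleMap 0 r) θ • g (circleMap 0 r θ)) x
      = (ContinuousLinearMap.apply ℂ H x)
        (∫ θ in (0:ℝ)..2 * Real.pi, deriv (circleMap 0 r) θ • g (circleMap 0 r θ)) := rfl
  rw [e1, ← h]
  refine intervalIntegral.integral_congr fun θ _ => ?_
  simp

lemma res_circleIntegral_add {f g : ℂ → H} {c : ℂ} {r : ℝ}
    (hf : CircleIntegrable f c r) (hg : CircleIntegrable g c r) :
    (∮ v in C(c, r), (f v + g v)) = (∮ v in C(c, r), f v) + ∮ v in C(c, r), g v := by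
  simp only [circleIntegral, smul_add]
  exact intervalIntegral.integral_add ((circleIntegrable_iff r).mp hf)
    ((circleIntegrable_iff r).mp hg)

lemma res_circleIntegrable_finsum {ι : Type*} (t : Finset ι) (F : ι → ℂ → H) {c : ℂ} {r : ℝ}
    (h : ∀ i ∈ t, CircleIntegrable (F i) c r) :
    CircleIntegrable (fun v => ∑ i ∈ t, F i v) c r := by
  classical
  induction t using Finset.induction with
  | empty => simpa using circleIntegrable_const (0 : H) c r
  | insert i t' hnot IH =>
    simp only [Finset.sum_insert hnot]
    exact (h i (Finset.mem_insert_self i t')).add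
      (IH (fun j hj => h j (Finset.mem_insert_of_mem hj)))

lemma res_circleIntegral_finsum {ι : Type*} (t : Finset ι) (F : ι → ℂ → H) {c : ℂ} {r : ℝ}
    (h : ∀ i ∈ t, CircleIntegrable (F i) c r) :
    (∮ v in C(c, r), ∑ i ∈ t, F i v) = ∑ i ∈ t, ∮ v in C(c, r), F i v := by
  classical
  induction t using Finset.induction with
  | empty => simp [circleIntegral]
  | insert i t' hnot IH =>
    have hi := h i (Finset.mem_insert_self i t')
    have ht : ∀ j ∈ t', CircleIntegrable (F j) c r :=
      fun j hj => h j (Finset.mem_insert_of_mem hj)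
    simp only [Finset.sum_insert hnot]
    rw [res_circleIntegral_add hi (res_circleIntegrable_finsum t' F ht), IH ht]

lemma res_integral_zpow_smul {r : ℝ} (d : ℤ) (hd : d ≠ -1) (y : H) :
    (∮ v in C(0, r), (v ^ d) • y) = 0 := by
  rw [circleIntegral.integral_smul_const]
  have : (∮ z in C((0 : ℂ), r), (z - 0) ^ d) = 0 :=
    circleIntegral.integral_sub_zpow_of_ne hd 0 0 r
  simp only [sub_zero] at this
  rw [this, zero_smul]

lemma res_integral_inv_smul {r : ℝ} (hr : r ≠ 0) (y : H) :
    (∮ v in C(0, r), v⁻¹ • y) = (2 * Real.pi * I) • y := by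
  rw [circleIntegral.integral_smul_const]
  have : (∮ z in C((0 : ℂ), r), (z - 0)⁻¹) = 2 * Real.pi * I :=
    circleIntegral.integral_sub_center_inv 0 hr
  simp only [sub_zero] at this
  rw [this]

lemma res_integral_const_zero {r : ℝ} (y : H) :
    (∮ _ in C((0:ℂ), r), y) = 0 := by
  have : (∮ v in C((0:ℂ), r), y) = ∮ v in C((0:ℂ), r), (v ^ (0 : ℤ)) • y := by
    congr 1; funext v; simp
  rw [this, res_integral_zpow_smul 0 (by decide) y]

end resAux

/-- The nilpotent operator `A = K₋₁ ∘ W`, where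
`K₋₁ = (2πi)⁻¹ ∮_{|v|=r} v • R(v) dv`. -/
noncomputable def resA {H : Type*} [NormedAddCommGroup H] [NormedSpace ℂ H]
    (R : ℂ → (H →L[ℂ] H)) (W : H →L[ℂ] H) (r : ℝ) : H →L[ℂ] H :=
  ((2 * (Real.pi : ℂ) * Complex.I)⁻¹ • ∮ v in C(0, r), v • R v) * W

/-- a resonant path tangent to the direction `W` at `N₀` to order at least
`k` produces resonance vectors of orders `1, …, k` from the derivatives of its eigenpath;
in particular, `χ(0)` has depth at least `k - 1`. -/
theorem tangent_resonant_path_gives_high_order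
    {H : Type*} [NormedAddCommGroup H] [InnerProductSpace ℂ H] [CompleteSpace H]
    (N₀ W : H →L[ℂ] H) (z₀ : ℂ) (r : ℝ) (hr : 0 < r)
    (R : ℂ → (H →L[ℂ] H))
    (hR : ∀ v : ℂ, v ≠ 0 → ‖v‖ ≤ r →
      (N₀ + v • W - z₀ • (1 : H →L[ℂ] H)) * R v = 1 ∧
      R v * (N₀ + v • W - z₀ • (1 : H →L[ℂ] H)) = 1)
    -- `z₀` is a semisimple eigenvalue of `N₀`
    (hsemisimple : ∀ χ₀ : H, N₀ χ₀ = z₀ • χ₀ → χ₀ ≠ 0 →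
      ∃ ψ : H, adjoint N₀ ψ = (starRingEnd ℂ) z₀ • ψ ∧ ⟪ψ, χ₀⟫_ℂ ≠ 0)
    (k : ℕ) (hk : 2 ≤ k) (c : ℕ → ℂ)
    (ρ : ℝ) (hρ : 0 < ρ)
    -- the resonant path `N(v) = N₀ + vW + Σ_{j=2}^{k-1} c_j v^j W + v^k M(v)`
    (M : ℂ → (H →L[ℂ] H)) (hM : AnalyticOnNhd ℂ M (Metric.ball (0 : ℂ) ρ))
    (Nf : ℂ → (H →L[ℂ] H))
    (hNf : ∀ v ∈ Metric.ball (0 : ℂ) ρ,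
      Nf v = N₀ + v • W + (∑ j ∈ Finset.Icc 2 (k - 1), c j * v ^ j) • W + v ^ k • M v)
    -- the eigenpath `χ` at the constant eigenvalue `z₀`
    (χ : ℂ → H) (hχ : AnalyticOnNhd ℂ χ (Metric.ball (0 : ℂ) ρ))
    (hχne : ∀ v ∈ Metric.ball (0 : ℂ) ρ, χ v ≠ 0)
    (heig : ∀ v ∈ Metric.ball (0 : ℂ) ρ, (Nf v) (χ v) = z₀ • χ v) :
    -- (1) `χ^(l-1)(0)` is a resonance vector of order exactly `l`, `l = 1, …, k`
    (∀ l : ℕ, 1 ≤ l → l ≤ k → ∀ v : ℂ, v ≠ 0 → ‖v‖ ≤ r →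
      (((1 : H →L[ℂ] H) - v • (R v * W)) ^ l) (iteratedDeriv (l - 1) χ 0) = 0 ∧
      (((1 : H →L[ℂ] H) - v • (R v * W)) ^ (l - 1)) (iteratedDeriv (l - 1) χ 0) ≠ 0) ∧
    -- (2) the action of `A` on the derivatives of the eigenpath
    (∀ l : ℕ, 1 ≤ l → l ≤ k →
      resA R W r (iteratedDeriv (l - 1) χ 0) =
        ((l - 1 : ℕ) : ℂ) • iteratedDeriv (l - 2) χ 0 +
        ∑ j ∈ Finset.Icc 2 (l - 1),
          ((Nat.factorial j : ℂ) * ((l - 1).choose j : ℂ) * c j) •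
            iteratedDeriv (l - 1 - j) χ 0) ∧
    -- (3) `χ(0)` has depth at least `k - 1`
    χ 0 ∈ Set.range ⇑(resA R W r ^ (k - 1)) := by
  classical
  set s : Set ℂ := Metric.ball (0 : ℂ) ρ with hs_def
  have hs : IsOpen s := Metric.isOpen_ball
  have h0s : (0 : ℂ) ∈ s := Metric.mem_ball_self hρ
  set a : ℕ → H := fun m => iteratedDeriv m χ 0 with ha_def
  set q : ℕ → ℂ := fun j => if j = 1 then 1 else c j with hq_def
  set B : ℕ → H := fun m => ∑ j ∈ Finset.Icc 1 m,
      (q j * ((m.choose j * j.factorial : ℕ) : ℂ)) • a (m - j) with hB_def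
  have hWχ : AnalyticOnNhd ℂ (fun v => W (χ v)) s := W.comp_analyticOnNhd hχ
  have hG : AnalyticOnNhd ℂ (fun v => (M v) (χ v)) s := fun x hx =>
    ((ContinuousLinearMap.id ℂ (H →L[ℂ] H)).analyticAt_bilinear (M x, χ x)).comp₂
      (hM x hx) (hχ x hx)
  -- Step 1: Taylor coefficient relations
  have hrel : ∀ m, m ≤ k - 1 → (N₀ - z₀ • (1 : H →L[ℂ] H)) (a m) = - W (B m) := by
    intro m hm
    set h : ℂ → H := fun v => (N₀ - z₀ • (1 : H →L[ℂ] H)) (χ v)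
      + ((∑ j ∈ Finset.Icc 1 (k - 1), q j • (v ^ j • W (χ v))) + v ^ k • (M v) (χ v))
      with hh_def
    have hsplit : Finset.Icc 1 (k - 1) = insert 1 (Finset.Icc 2 (k - 1)) := by
      ext j; simp only [Finset.mem_Icc, Finset.mem_insert]; omega
    have hzero : Set.EqOn h (fun _ => (0 : H)) s := by
      intro v hv
      have h1 := heig v hv
      rw [hNf v hv] at h1
      simp only [ContinuousLinearMap.add_apply, ContinuousLinearMap.coe_smul',
        Pi.smul_apply, ContinuousLinearMap.smul_apply] at h1
      have h2 : (∑ j ∈ Finset.Icc 1 (k - 1), q j • (v ^ j • W (χ v)))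
          = v • W (χ v) + (∑ j ∈ Finset.Icc 2 (k - 1), c j * v ^ j) • W (χ v) := by
        rw [hsplit, Finset.sum_insert (by simp), Finset.sum_smul]
        congr 1
        · simp [hq_def]
        · refine Finset.sum_congr rfl fun j hj => ?_
          have hj2 : j ≠ 1 := by
            have := (Finset.mem_Icc.mp hj).1; omega
          rw [hq_def]
          simp only [if_neg hj2, smul_smul]
      have h3 := sub_eq_zero_of_eq h1
      show (N₀ - z₀ • (1 : H →L[ℂ] H)) (χ v)
        + ((∑ j ∈ Finset.Icc 1 (k - 1), q j • (v ^ j • W (χ v))) + v ^ k • (M v) (χ v)) = 0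
      rw [h2, ← h3]
      simp only [ContinuousLinearMap.sub_apply, ContinuousLinearMap.smul_apply,
        ContinuousLinearMap.one_apply]
      abel
    have hder0 : iteratedDeriv m h 0 = 0 := by
      have he : h =ᶠ[𝓝 (0 : ℂ)] (fun _ => (0 : H)) :=
        Filter.eventuallyEq_of_mem (hs.mem_nhds h0s) hzero
      rw [he.iteratedDeriv_eq m, res_iteratedDeriv_zero_fun m 0]
    have hterm2j : ∀ j : ℕ, AnalyticOnNhd ℂ (fun v : ℂ => q j • (v ^ j • W (χ v))) s :=
      fun j => analyticOnNhd_const.smul ((analyticOnNhd_id.pow j).smul hWχ)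
    have hterm2 : AnalyticOnNhd ℂ
        (fun v : ℂ => ∑ j ∈ Finset.Icc 1 (k - 1), q j • (v ^ j • W (χ v))) s := by
      intro x hx
      exact Finset.analyticAt_fun_sum _ (fun j hj => hterm2j j x hx)
    have hterm3 : AnalyticOnNhd ℂ (fun v : ℂ => v ^ k • (M v) (χ v)) s :=
      (analyticOnNhd_id.pow k).smul hG
    have hterm1 : AnalyticOnNhd ℂ (fun v : ℂ => (N₀ - z₀ • (1 : H →L[ℂ] H)) (χ v)) s :=
      (N₀ - z₀ • (1 : H →L[ℂ] H)).comp_analyticOnNhd hχ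
    have hterm23 : AnalyticOnNhd ℂ (fun v : ℂ =>
        (∑ j ∈ Finset.Icc 1 (k - 1), q j • (v ^ j • W (χ v))) + v ^ k • (M v) (χ v)) s :=
      hterm2.add hterm3
    have e0 : iteratedDeriv m h 0
        = iteratedDeriv m (fun v : ℂ => (N₀ - z₀ • (1 : H →L[ℂ] H)) (χ v)) 0
          + iteratedDeriv m (fun v : ℂ =>
              (∑ j ∈ Finset.Icc 1 (k - 1), q j • (v ^ j • W (χ v)))
                + v ^ k • (M v) (χ v)) 0 :=
      res_iteratedDeriv_add hs hterm1 hterm23 m 0 h0s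
    have e1 : iteratedDeriv m (fun v : ℂ =>
          (∑ j ∈ Finset.Icc 1 (k - 1), q j • (v ^ j • W (χ v))) + v ^ k • (M v) (χ v)) 0
        = iteratedDeriv m
            (fun v : ℂ => ∑ j ∈ Finset.Icc 1 (k - 1), q j • (v ^ j • W (χ v))) 0
          + iteratedDeriv m (fun v : ℂ => v ^ k • (M v) (χ v)) 0 :=
      res_iteratedDeriv_add hs hterm2 hterm3 m 0 h0s
    have e2 : iteratedDeriv m (fun v : ℂ => (N₀ - z₀ • (1 : H →L[ℂ] H)) (χ v)) 0
        = (N₀ - z₀ • (1 : H →L[ℂ] H)) (a m) :=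
      res_iteratedDeriv_clm_comp _ hs hχ m 0 h0s
    have e6 : ∀ n : ℕ, iteratedDeriv n (fun v : ℂ => W (χ v)) 0 = W (a n) :=
      fun n => res_iteratedDeriv_clm_comp W hs hχ n 0 h0s
    have e7 : iteratedDeriv m (fun v : ℂ => v ^ k • (M v) (χ v)) 0 = 0 := by
      rw [res_iteratedDeriv_monomial k hs h0s hG m, if_neg (by omega)]
    have esum : iteratedDeriv m
          (fun v : ℂ => ∑ j ∈ Finset.Icc 1 (k - 1), q j • (v ^ j • W (χ v))) 0
        = ∑ j ∈ Finset.Icc 1 (k - 1), q j •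
            (if j ≤ m then ((m.choose j * j.factorial : ℕ) : ℂ) • W (a (m - j)) else 0) := by
      rw [res_iteratedDeriv_finsum _ _ hs (fun j _ => hterm2j j) m 0 h0s]
      refine Finset.sum_congr rfl fun j hj => ?_
      have e4 : iteratedDeriv m (fun v : ℂ => q j • (v ^ j • W (χ v))) 0
          = q j • iteratedDeriv m (fun v : ℂ => v ^ j • W (χ v)) 0 :=
        res_iteratedDeriv_const_smul _ hs ((analyticOnNhd_id.pow j).smul hWχ) m 0 h0s
      rw [e4, res_iteratedDeriv_monomial j hs h0s hWχ m]
      congr 1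
      by_cases hjm : j ≤ m
      · rw [if_pos hjm, if_pos hjm, e6 (m - j)]
      · rw [if_neg hjm, if_neg hjm]
    have hcalc : iteratedDeriv m h 0
        = (N₀ - z₀ • (1 : H →L[ℂ] H)) (a m)
          + ((∑ j ∈ Finset.Icc 1 (k - 1), q j •
              (if j ≤ m then ((m.choose j * j.factorial : ℕ) : ℂ) • W (a (m - j)) else 0))
            + 0) := by
      rw [e0, e1, e2, esum, e7]
    have hBW : W (B m) = ∑ j ∈ Finset.Icc 1 m,
        q j • (((m.choose j * j.factorial : ℕ) : ℂ) • W (a (m - j))) := by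
      rw [hB_def, map_sum]
      refine Finset.sum_congr rfl fun j hj => ?_
      rw [ContinuousLinearMap.map_smul, mul_smul]
    have hsum_eq : (∑ j ∈ Finset.Icc 1 (k - 1), q j •
          (if j ≤ m then ((m.choose j * j.factorial : ℕ) : ℂ) • W (a (m - j)) else 0))
        = W (B m) := by
      rw [hBW]
      rw [← Finset.sum_subset (Finset.Icc_subset_Icc_right hm)
        (fun j hj hj2 => ?_)]
      · refine Finset.sum_congr rfl fun j hj => ?_
        rw [if_pos (Finset.mem_Icc.mp hj).2]
      · have : ¬ j ≤ m := by
          have := Finset.mem_Icc.mp hj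
          simp only [Finset.mem_Icc, not_and, not_le] at hj2
          omega
        rw [if_neg this, smul_zero]
    rw [hder0, hsum_eq, add_zero] at hcalc
    exact eq_neg_of_add_eq_zero_left hcalc.symm
  -- operator algebra
  have hTmul : ∀ v : ℂ, v ≠ 0 → ‖v‖ ≤ r →
      R v * (N₀ - z₀ • (1 : H →L[ℂ] H)) = (1 : H →L[ℂ] H) - v • (R v * W) := by
    intro v hv hvr
    have h2 : (N₀ - z₀ • (1 : H →L[ℂ] H))
        = (N₀ + v • W - z₀ • (1 : H →L[ℂ] H)) - v • W := by abel
    rw [h2, mul_sub, (hR v hv hvr).2, mul_smul_comm]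
  have hTa : ∀ v : ℂ, v ≠ 0 → ‖v‖ ≤ r → ∀ m, m ≤ k - 1 →
      ((1 : H →L[ℂ] H) - v • (R v * W)) (a m)
        = v⁻¹ • (((1 : H →L[ℂ] H) - v • (R v * W)) (B m) - B m) := by
    intro v hv hvr m hm
    have hX : ((1 : H →L[ℂ] H) - v • (R v * W)) (B m) - B m
        = -(v • ((R v * W) (B m))) := by
      simp only [ContinuousLinearMap.sub_apply, ContinuousLinearMap.one_apply,
        ContinuousLinearMap.smul_apply]
      abel
    rw [hX, smul_neg, smul_smul, inv_mul_cancel₀ hv, one_smul, ← hTmul v hv hvr,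
      ContinuousLinearMap.mul_apply, hrel m hm, map_neg, ← ContinuousLinearMap.mul_apply]
  -- nilpotency
  have hNil : ∀ m, m ≤ k - 1 → ∀ v : ℂ, v ≠ 0 → ‖v‖ ≤ r →
      ((((1 : H →L[ℂ] H) - v • (R v * W))) ^ (m + 1)) (a m) = 0 := by
    intro m
    induction m using Nat.strong_induction_on with
    | _ m IH =>
      intro hm v hv hvr
      have hkill : ∀ (d p : ℕ) (x : H), (((1 : H →L[ℂ] H) - v • (R v * W)) ^ p) x = 0 →
          (((1 : H →L[ℂ] H) - v • (R v * W)) ^ (d + p)) x = 0 := by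
        intro d p x hx
        rw [pow_add, ContinuousLinearMap.mul_apply, hx, map_zero]
      have hTBm : ((((1 : H →L[ℂ] H) - v • (R v * W))) ^ m) (B m) = 0 := by
        rw [hB_def, map_sum]
        refine Finset.sum_eq_zero fun j hj => ?_
        obtain ⟨hj1, hj2⟩ := Finset.mem_Icc.mp hj
        rw [_root_.map_smul]
        have hz := hkill (m - (m - j + 1)) ((m - j) + 1) (a (m - j))
          (IH (m - j) (by omega) (by omega) v hv hvr)
        rw [show (m - (m - j + 1)) + ((m - j) + 1) = m from by omega] at hz
        rw [hz, smul_zero]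
      calc ((((1 : H →L[ℂ] H) - v • (R v * W))) ^ (m + 1)) (a m)
          = ((((1 : H →L[ℂ] H) - v • (R v * W))) ^ m)
            (((1 : H →L[ℂ] H) - v • (R v * W)) (a m)) := by
            rw [pow_succ, ContinuousLinearMap.mul_apply]
        _ = v⁻¹ • (((((1 : H →L[ℂ] H) - v • (R v * W))) ^ m)
              (((1 : H →L[ℂ] H) - v • (R v * W)) (B m))
            - ((((1 : H →L[ℂ] H) - v • (R v * W))) ^ m) (B m)) := by
            rw [hTa v hv hvr m hm, _root_.map_smul, map_sub]
        _ = v⁻¹ • (((1 : H →L[ℂ] H) - v • (R v * W))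
              (((((1 : H →L[ℂ] H) - v • (R v * W))) ^ m) (B m))
            - ((((1 : H →L[ℂ] H) - v • (R v * W))) ^ m) (B m)) := by
            rw [← ContinuousLinearMap.mul_apply, ← pow_succ, pow_succ',
              ContinuousLinearMap.mul_apply]
        _ = 0 := by rw [hTBm, map_zero, sub_zero, smul_zero]
  -- exact order
  have hBzero : B 0 = 0 := by
    rw [hB_def]
    simp
  have hTa0 : ∀ v : ℂ, v ≠ 0 → ‖v‖ ≤ r →
      ((1 : H →L[ℂ] H) - v • (R v * W)) (a 0) = 0 := by
    intro v hv hvr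
    rw [hTa v hv hvr 0 (by omega), hBzero, map_zero, zero_sub, neg_zero, smul_zero]
  have hOrd : ∀ m, m ≤ k - 1 → ∀ v : ℂ, v ≠ 0 → ‖v‖ ≤ r →
      ((((1 : H →L[ℂ] H) - v • (R v * W))) ^ m) (a m)
        = ((m.factorial : ℂ) * (-v⁻¹) ^ m) • a 0 := by
    intro m
    induction m with
    | zero => intro _ v hv hvr; simp
    | succ n IH =>
      intro hm v hv hvr
      have hn : n ≤ k - 1 := by omega
      have hsplit1 : Finset.Icc 1 (n + 1) = insert 1 (Finset.Icc 2 (n + 1)) := by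
        ext j; simp only [Finset.mem_Icc, Finset.mem_insert]; omega
      have hTBn1 : ((((1 : H →L[ℂ] H) - v • (R v * W))) ^ n) (B (n + 1))
          = (((n + 1 : ℕ) : ℂ) * ((n.factorial : ℂ) * (-v⁻¹) ^ n)) • a 0 := by
        rw [hB_def, map_sum, hsplit1, Finset.sum_insert (by simp)]
        have hrest : ∀ j ∈ Finset.Icc 2 (n + 1),
            ((((1 : H →L[ℂ] H) - v • (R v * W))) ^ n)
              ((q j * (((n + 1).choose j * j.factorial : ℕ) : ℂ)) • a (n + 1 - j)) = 0 := by
          intro j hj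
          obtain ⟨hj1, hj2⟩ := Finset.mem_Icc.mp hj
          rw [_root_.map_smul]
          have hkill : ∀ (d p : ℕ) (x : H), (((1 : H →L[ℂ] H) - v • (R v * W)) ^ p) x = 0 →
              (((1 : H →L[ℂ] H) - v • (R v * W)) ^ (d + p)) x = 0 := by
            intro d p x hx
            rw [pow_add, ContinuousLinearMap.mul_apply, hx, map_zero]
          have hz := hkill (n - (n + 1 - j + 1)) ((n + 1 - j) + 1) (a (n + 1 - j))
            (hNil (n + 1 - j) (by omega) v hv hvr)
          rw [show (n - (n + 1 - j + 1)) + ((n + 1 - j) + 1) = n from by omega] at hz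
          rw [hz, smul_zero]
        rw [Finset.sum_eq_zero hrest, add_zero, _root_.map_smul, Nat.add_sub_cancel,
          IH hn v hv hvr, smul_smul]
        congr 1
        rw [hq_def]
        simp [Nat.choose_one_right]
      calc ((((1 : H →L[ℂ] H) - v • (R v * W))) ^ (n + 1)) (a (n + 1))
          = ((((1 : H →L[ℂ] H) - v • (R v * W))) ^ n)
            (((1 : H →L[ℂ] H) - v • (R v * W)) (a (n + 1))) := by
            rw [pow_succ, ContinuousLinearMap.mul_apply]
        _ = v⁻¹ • (((((1 : H →L[ℂ] H) - v • (R v * W))) ^ n)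
              (((1 : H →L[ℂ] H) - v • (R v * W)) (B (n + 1)))
            - ((((1 : H →L[ℂ] H) - v • (R v * W))) ^ n) (B (n + 1))) := by
            rw [hTa v hv hvr (n + 1) hm, _root_.map_smul, map_sub]
        _ = v⁻¹ • (((1 : H →L[ℂ] H) - v • (R v * W))
              (((((1 : H →L[ℂ] H) - v • (R v * W))) ^ n) (B (n + 1)))
            - ((((1 : H →L[ℂ] H) - v • (R v * W))) ^ n) (B (n + 1))) := by
            rw [← ContinuousLinearMap.mul_apply, ← pow_succ, pow_succ',
              ContinuousLinearMap.mul_apply]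
        _ = v⁻¹ • ((0 : H)
            - (((n + 1 : ℕ) : ℂ) * ((n.factorial : ℂ) * (-v⁻¹) ^ n)) • a 0) := by
            rw [hTBn1, _root_.map_smul, hTa0 v hv hvr, smul_zero]
        _ = (((n + 1).factorial : ℂ) * (-v⁻¹) ^ (n + 1)) • a 0 := by
            rw [zero_sub, smul_neg, smul_smul, ← neg_smul]
            congr 1
            rw [Nat.factorial_succ]
            push_cast
            ring
  -- the action of A
  -- continuity of the resolvent on the circle
  have hsphere : ∀ v : ℂ, v ∈ Metric.sphere (0 : ℂ) r → v ≠ 0 ∧ ‖v‖ ≤ r := by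
    intro v hv
    have hnorm : ‖v‖ = r := by simpa using hv
    refine ⟨fun h0 => ?_, le_of_eq hnorm⟩
    rw [h0, norm_zero] at hnorm
    exact hr.ne hnorm
  have hRcont : ContinuousOn R (Metric.sphere (0 : ℂ) r) := by
    have hgc : ContinuousOn (fun v : ℂ => Ring.inverse (N₀ + v • W - z₀ • (1 : H →L[ℂ] H)))
        (Metric.sphere (0 : ℂ) r) := by
      intro v hv
      obtain ⟨hv0, hvr⟩ := hsphere v hv
      have hu : IsUnit (N₀ + v • W - z₀ • (1 : H →L[ℂ] H)) :=
        ⟨⟨N₀ + v • W - z₀ • (1 : H →L[ℂ] H), R v, (hR v hv0 hvr).1, (hR v hv0 hvr).2⟩, rfl⟩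
      have hc1 : ContinuousAt (fun v : ℂ => N₀ + v • W - z₀ • (1 : H →L[ℂ] H)) v := by
        fun_prop
      have hc2 : ContinuousAt Ring.inverse (N₀ + v • W - z₀ • (1 : H →L[ℂ] H)) := by
        have := NormedRing.inverse_continuousAt hu.unit
        rwa [IsUnit.unit_spec] at this
      have hc3 : ContinuousAt
          (Ring.inverse ∘ (fun v : ℂ => N₀ + v • W - z₀ • (1 : H →L[ℂ] H))) v :=
        ContinuousAt.comp (x := v) hc2 hc1
      exact hc3.continuousWithinAt
    refine hgc.congr ?_
    intro v hv
    obtain ⟨hv0, hvr⟩ := hsphere v hv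
    have hu : (⟨N₀ + v • W - z₀ • (1 : H →L[ℂ] H), R v, (hR v hv0 hvr).1,
        (hR v hv0 hvr).2⟩ : (H →L[ℂ] H)ˣ) = (⟨N₀ + v • W - z₀ • (1 : H →L[ℂ] H), R v,
        (hR v hv0 hvr).1, (hR v hv0 hvr).2⟩ : (H →L[ℂ] H)ˣ) := rfl
    calc R v = ↑(⟨N₀ + v • W - z₀ • (1 : H →L[ℂ] H), R v, (hR v hv0 hvr).1,
          (hR v hv0 hvr).2⟩ : (H →L[ℂ] H)ˣ)⁻¹ := rfl
      _ = Ring.inverse (N₀ + v • W - z₀ • (1 : H →L[ℂ] H)) := (Ring.inverse_unit _).symm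
  have hne0 : ∀ v : ℂ, v ∈ Metric.sphere (0 : ℂ) r → v ≠ 0 := fun v hv => (hsphere v hv).1
  have hTcont : ∀ x : H,
      ContinuousOn (fun v : ℂ => ((1 : H →L[ℂ] H) - v • (R v * W)) x)
        (Metric.sphere (0 : ℂ) r) := by
    intro x
    have h1 : ContinuousOn (fun v : ℂ => x - v • (R v) (W x)) (Metric.sphere (0 : ℂ) r) :=
      continuousOn_const.sub (continuousOn_id.smul
        ((ContinuousLinearMap.apply ℂ H (W x)).continuous.comp_continuousOn hRcont))
    exact h1
  have hTint : ∀ (i : ℕ) (x : H),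
      CircleIntegrable (fun v : ℂ => (v⁻¹) ^ i • ((1 : H →L[ℂ] H) - v • (R v * W)) x) 0 r := by
    intro i x
    refine ContinuousOn.circleIntegrable hr.le ?_
    exact ((continuousOn_id.inv₀ hne0).pow i).smul (hTcont x)
  have hBint : ∀ (i : ℕ) (y : H),
      CircleIntegrable (fun v : ℂ => (v⁻¹) ^ i • y) 0 r := by
    intro i y
    refine ContinuousOn.circleIntegrable hr.le ?_
    exact ((continuousOn_id.inv₀ hne0).pow i).smul continuousOn_const
  -- vanishing of higher inverse-power integrals
  have hInvPow : ∀ (i : ℕ) (y : H), 2 ≤ i → (∮ v in C(0, r), (v⁻¹) ^ i • y) = 0 := by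
    intro i y hi
    have hcong : (fun v : ℂ => (v⁻¹) ^ i • y) = fun v : ℂ => (v ^ (-(i : ℤ))) • y := by
      funext v
      rw [zpow_neg, zpow_natCast, inv_pow]
    rw [hcong]
    exact res_integral_zpow_smul _ (by omega) y
  have hZero : ∀ m, m ≤ k - 1 → ∀ i : ℕ,
      (∮ v in C(0, r), (v⁻¹) ^ (i + 1) • ((1 : H →L[ℂ] H) - v • (R v * W)) (a m)) = 0 := by
    intro m
    induction m using Nat.strong_induction_on with
    | _ m IH =>
      intro hm i
      have heq : Set.EqOn (fun v : ℂ => (v⁻¹) ^ (i + 1) • ((1 : H →L[ℂ] H) - v • (R v * W)) (a m))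
          (fun v : ℂ => (∑ j ∈ Finset.Icc 1 m, (q j * ((m.choose j * j.factorial : ℕ) : ℂ)) •
              ((v⁻¹) ^ (i + 2) • ((1 : H →L[ℂ] H) - v • (R v * W)) (a (m - j))))
            - (v⁻¹) ^ (i + 2) • B m) (Metric.sphere (0 : ℂ) r) := by
        intro v hv
        obtain ⟨hv0, hvr⟩ := hsphere v hv
        have h1 : ((1 : H →L[ℂ] H) - v • (R v * W)) (a m)
            = v⁻¹ • (((1 : H →L[ℂ] H) - v • (R v * W)) (B m) - B m) := hTa v hv0 hvr m hm
        have h2 : ((1 : H →L[ℂ] H) - v • (R v * W)) (B m)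
            = ∑ j ∈ Finset.Icc 1 m, (q j * ((m.choose j * j.factorial : ℕ) : ℂ)) •
                ((1 : H →L[ℂ] H) - v • (R v * W)) (a (m - j)) := by
          rw [hB_def, map_sum]
          exact Finset.sum_congr rfl fun j hj => _root_.map_smul _ _ _
        show (v⁻¹) ^ (i + 1) • ((1 : H →L[ℂ] H) - v • (R v * W)) (a m) = _
        rw [h1, h2, smul_smul, ← pow_succ, smul_sub, Finset.smul_sum]
        congr 1
        refine Finset.sum_congr rfl fun j hj => ?_
        rw [smul_comm]
      rw [circleIntegral.integral_congr hr.le heq]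
      have hint1 : CircleIntegrable (fun v : ℂ => ∑ j ∈ Finset.Icc 1 m,
          (q j * ((m.choose j * j.factorial : ℕ) : ℂ)) •
            ((v⁻¹) ^ (i + 2) • ((1 : H →L[ℂ] H) - v • (R v * W)) (a (m - j)))) 0 r :=
        res_circleIntegrable_finsum _ _ (fun j _ => (hTint (i + 2) (a (m - j))).smul _)
      rw [circleIntegral.integral_sub hint1 (hBint (i + 2) (B m)),
        res_circleIntegral_finsum (Finset.Icc 1 m)
          (fun j => fun v : ℂ => (q j * ((m.choose j * j.factorial : ℕ) : ℂ)) •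
            ((v⁻¹) ^ (i + 2) • ((1 : H →L[ℂ] H) - v • (R v * W)) (a (m - j))))
          (fun j _ => (hTint (i + 2) (a (m - j))).smul _)]
      have hterm : ∀ j ∈ Finset.Icc 1 m,
          (∮ v in C(0, r), (q j * ((m.choose j * j.factorial : ℕ) : ℂ)) •
            ((v⁻¹) ^ (i + 2) • ((1 : H →L[ℂ] H) - v • (R v * W)) (a (m - j)))) = 0 := by
        intro j hj
        obtain ⟨hj1, hj2⟩ := Finset.mem_Icc.mp hj
        rw [circleIntegral.integral_smul, IH (m - j) (by omega) (by omega) (i + 1), smul_zero]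
      rw [Finset.sum_eq_zero hterm, hInvPow (i + 2) (B m) (by omega), sub_zero]
  have hMain : ∀ m, m ≤ k - 1 →
      (∮ v in C(0, r), ((1 : H →L[ℂ] H) - v • (R v * W)) (a m))
        = -((2 * Real.pi * I : ℂ) • B m) := by
    intro m hm
    have heq : Set.EqOn (fun v : ℂ => ((1 : H →L[ℂ] H) - v • (R v * W)) (a m))
        (fun v : ℂ => (∑ j ∈ Finset.Icc 1 m, (q j * ((m.choose j * j.factorial : ℕ) : ℂ)) •
            ((v⁻¹) ^ 1 • ((1 : H →L[ℂ] H) - v • (R v * W)) (a (m - j))))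
          - v⁻¹ • B m) (Metric.sphere (0 : ℂ) r) := by
      intro v hv
      obtain ⟨hv0, hvr⟩ := hsphere v hv
      have h1 := hTa v hv0 hvr m hm
      have h2 : ((1 : H →L[ℂ] H) - v • (R v * W)) (B m)
          = ∑ j ∈ Finset.Icc 1 m, (q j * ((m.choose j * j.factorial : ℕ) : ℂ)) •
              ((1 : H →L[ℂ] H) - v • (R v * W)) (a (m - j)) := by
        rw [hB_def, map_sum]
        exact Finset.sum_congr rfl fun j hj => _root_.map_smul _ _ _
      show ((1 : H →L[ℂ] H) - v • (R v * W)) (a m) = _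
      rw [h1, h2, smul_sub, Finset.smul_sum]
      congr 1
      refine Finset.sum_congr rfl fun j hj => ?_
      rw [smul_comm, pow_one]
    rw [circleIntegral.integral_congr hr.le heq]
    have hint1 : CircleIntegrable (fun v : ℂ => ∑ j ∈ Finset.Icc 1 m,
        (q j * ((m.choose j * j.factorial : ℕ) : ℂ)) •
          ((v⁻¹) ^ 1 • ((1 : H →L[ℂ] H) - v • (R v * W)) (a (m - j)))) 0 r :=
      res_circleIntegrable_finsum _ _ (fun j _ => (hTint 1 (a (m - j))).smul _)
    have hint2 : CircleIntegrable (fun v : ℂ => v⁻¹ • B m) 0 r := by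
      have := hBint 1 (B m)
      simpa using this
    rw [circleIntegral.integral_sub hint1 hint2,
      res_circleIntegral_finsum (Finset.Icc 1 m)
        (fun j => fun v : ℂ => (q j * ((m.choose j * j.factorial : ℕ) : ℂ)) •
          ((v⁻¹) ^ 1 • ((1 : H →L[ℂ] H) - v • (R v * W)) (a (m - j))))
        (fun j _ => (hTint 1 (a (m - j))).smul _)]
    have hterm : ∀ j ∈ Finset.Icc 1 m,
        (∮ v in C(0, r), (q j * ((m.choose j * j.factorial : ℕ) : ℂ)) •
          ((v⁻¹) ^ 1 • ((1 : H →L[ℂ] H) - v • (R v * W)) (a (m - j)))) = 0 := by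
      intro j hj
      obtain ⟨hj1, hj2⟩ := Finset.mem_Icc.mp hj
      rw [circleIntegral.integral_smul]
      have hz := hZero (m - j) (by omega) 0
      simp only [zero_add] at hz
      rw [hz, smul_zero]
    rw [Finset.sum_eq_zero hterm, res_integral_inv_smul hr.ne' (B m), zero_sub]
  have hIntOp : CircleIntegrable (fun v : ℂ => v • R v) 0 r :=
    ContinuousOn.circleIntegrable hr.le (continuousOn_id.smul hRcont)
  have hA : ∀ m, m ≤ k - 1 → resA R W r (a m) = B m := by
    intro m hm
    have e1 : resA R W r (a m)
        = (2 * (Real.pi : ℂ) * Complex.I)⁻¹ • ((∮ v in C(0, r), v • R v) (W (a m))) := by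
      rw [resA, ContinuousLinearMap.mul_apply, ContinuousLinearMap.smul_apply]
    rw [e1, res_circleIntegral_apply hIntOp (W (a m))]
    have e2 : (fun v : ℂ => (v • R v) (W (a m)))
        = fun v : ℂ => a m - ((1 : H →L[ℂ] H) - v • (R v * W)) (a m) := by
      funext v
      simp only [ContinuousLinearMap.smul_apply, ContinuousLinearMap.sub_apply,
        ContinuousLinearMap.one_apply, ContinuousLinearMap.mul_apply, sub_sub_cancel]
    rw [e2]
    have hint2 : CircleIntegrable
        (fun v : ℂ => ((1 : H →L[ℂ] H) - v • (R v * W)) (a m)) 0 r := by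
      have := hTint 0 (a m)
      simpa using this
    rw [circleIntegral.integral_sub (circleIntegrable_const (a m) 0 r) hint2,
      res_integral_const_zero (a m), hMain m hm, zero_sub, neg_neg, smul_smul,
      inv_mul_cancel₀ Complex.two_pi_I_ne_zero, one_smul]
  refine ⟨?_, ?_, ?_⟩
  · -- part (1)
    intro l hl1 hlk v hv hvr
    have hm : l - 1 ≤ k - 1 := by omega
    constructor
    · have h1 := hNil (l - 1) hm v hv hvr
      rw [show l - 1 + 1 = l from by omega] at h1
      exact h1
    · have h2 := hOrd (l - 1) hm v hv hvr
      have ha0 : a 0 ≠ 0 := by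
        have he : a 0 = χ 0 := by
          show iteratedDeriv 0 χ 0 = χ 0
          rw [iteratedDeriv_zero]
        rw [he]
        exact hχne 0 h0s
      have hco : (((l - 1).factorial : ℂ) * (-v⁻¹) ^ (l - 1)) ≠ 0 :=
        mul_ne_zero (Nat.cast_ne_zero.mpr (Nat.factorial_ne_zero _))
          (pow_ne_zero _ (neg_ne_zero.mpr (inv_ne_zero hv)))
      intro hcon
      have hcon' : ((((1 : H →L[ℂ] H) - v • (R v * W))) ^ (l - 1)) (a (l - 1)) = 0 := hcon
      rw [h2] at hcon'
      exact smul_ne_zero hco ha0 hcon'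
  · -- part (2)
    intro l hl1 hlk
    have hm : l - 1 ≤ k - 1 := by omega
    show resA R W r (a (l - 1)) =
        ((l - 1 : ℕ) : ℂ) • a (l - 2) +
        ∑ j ∈ Finset.Icc 2 (l - 1),
          ((Nat.factorial j : ℂ) * ((l - 1).choose j : ℂ) * c j) • a (l - 1 - j)
    rw [hA (l - 1) hm]
    simp only [hB_def]
    by_cases hl2 : 2 ≤ l
    · have hsplitl : Finset.Icc 1 (l - 1) = insert 1 (Finset.Icc 2 (l - 1)) := by
        ext j; simp only [Finset.mem_Icc, Finset.mem_insert]; omega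
      rw [hsplitl, Finset.sum_insert (by simp)]
      congr 1
      · have hidx : l - 1 - 1 = l - 2 := by omega
        rw [hidx]
        congr 1
        rw [hq_def]
        simp [Nat.choose_one_right]
      · refine Finset.sum_congr rfl fun j hj => ?_
        obtain ⟨hj1, hj2⟩ := Finset.mem_Icc.mp hj
        congr 1
        rw [hq_def]
        simp only [if_neg (by omega : ¬ j = 1)]
        push_cast
        ring
    · have hl1' : l = 1 := by omega
      subst hl1'
      simp
  · -- part (3)
    set A : H →L[ℂ] H := resA R W r with hA_def
    have hA1 : A (a 1) = a 0 := by
      rw [hA_def, hA 1 (by omega)]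
      simp only [hB_def]
      rw [Finset.Icc_self, Finset.sum_singleton, hq_def]
      simp
    set V : ℕ → Submodule ℂ H := fun i => Submodule.span ℂ (a '' {j | j ≤ i}) with hV_def
    have hVmono : ∀ i, V i ≤ V (i + 1) := fun i =>
      Submodule.span_mono (Set.image_mono (fun j hj => le_trans hj (Nat.le_succ i)))
    have hsplitB : ∀ i : ℕ, B (i + 2) = ((i + 2 : ℕ) : ℂ) • a (i + 1)
        + ∑ j ∈ Finset.Icc 2 (i + 2),
            (q j * (((i + 2).choose j * j.factorial : ℕ) : ℂ)) • a (i + 2 - j) := by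
      intro i
      simp only [hB_def]
      have hsp : Finset.Icc 1 (i + 2) = insert 1 (Finset.Icc 2 (i + 2)) := by
        ext j; simp only [Finset.mem_Icc, Finset.mem_insert]; omega
      rw [hsp, Finset.sum_insert (by simp)]
      congr 1
      rw [show i + 2 - 1 = i + 1 from rfl]
      congr 1
      rw [hq_def]
      simp [Nat.choose_one_right]
    have hQ : ∀ i, i + 1 ≤ k - 1 → V i ≤ Submodule.map (A : H →ₗ[ℂ] H) (V (i + 1)) := by
      intro i
      induction i with
      | zero =>
        intro _
        refine Submodule.span_le.mpr ?_
        rintro x ⟨t, ht, rfl⟩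
        have ht0 : t = 0 := by simpa using ht
        subst ht0
        exact ⟨a 1, Submodule.subset_span ⟨1, by simp, rfl⟩, hA1⟩
      | succ i IH =>
        intro hik
        refine Submodule.span_le.mpr ?_
        rintro x ⟨t, ht, rfl⟩
        have ht' : t ≤ i + 1 := ht
        by_cases htc : t ≤ i
        · exact (Submodule.map_mono (hVmono (i + 1)))
            (IH (by omega) (Submodule.subset_span ⟨t, htc, rfl⟩))
        · have ht1 : t = i + 1 := by omega
          subst ht1
          have hAi2 : A (a (i + 2)) = B (i + 2) := by
            rw [hA_def]; exact hA (i + 2) (by omega)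
          have hsum_mem : (∑ j ∈ Finset.Icc 2 (i + 2),
              (q j * (((i + 2).choose j * j.factorial : ℕ) : ℂ)) • a (i + 2 - j))
              ∈ Submodule.map (A : H →ₗ[ℂ] H) (V (i + 2)) := by
            refine Submodule.sum_mem _ fun j hj => ?_
            obtain ⟨hj1, hj2⟩ := Finset.mem_Icc.mp hj
            refine Submodule.smul_mem _ _ ?_
            have hidx : i + 2 - j ≤ i := by omega
            have hmem : a (i + 2 - j) ∈ V i :=
              Submodule.subset_span ⟨i + 2 - j, hidx, rfl⟩
            exact (Submodule.map_mono (hVmono (i + 1))) (IH (by omega) hmem)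
          have hAmem : A (a (i + 2)) ∈ Submodule.map (A : H →ₗ[ℂ] H) (V (i + 2)) :=
            Submodule.mem_map_of_mem (Submodule.subset_span ⟨i + 2, by simp, rfl⟩)
          have hne : ((i + 2 : ℕ) : ℂ) ≠ 0 := by
            exact_mod_cast Nat.succ_ne_zero (i + 1)
          have hkey : a (i + 1) = ((i + 2 : ℕ) : ℂ)⁻¹ • (A (a (i + 2))
              - ∑ j ∈ Finset.Icc 2 (i + 2),
                  (q j * (((i + 2).choose j * j.factorial : ℕ) : ℂ)) • a (i + 2 - j)) := by
            rw [hAi2, hsplitB i, add_sub_cancel_right, smul_smul, inv_mul_cancel₀ hne,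
              one_smul]
          rw [hkey]
          exact Submodule.smul_mem _ _ (Submodule.sub_mem _ hAmem hsum_mem)
    have hP : ∀ m, m ≤ k - 1 → ∃ x, x ∈ V m ∧ (A ^ m) x = a 0 := by
      intro m
      induction m with
      | zero =>
        intro _
        exact ⟨a 0, Submodule.subset_span ⟨0, by simp, rfl⟩, by simp⟩
      | succ m IH =>
        intro hm
        obtain ⟨y, hyV, hy⟩ := IH (by omega)
        obtain ⟨z, hzV, hz⟩ := hQ m (by omega) hyV
        refine ⟨z, hzV, ?_⟩
        rw [pow_succ, ContinuousLinearMap.mul_apply, (show A z = y from hz), hy]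
    obtain ⟨x, hxV, hx⟩ := hP (k - 1) le_rfl
    refine ⟨x, ?_⟩
    have he : a 0 = χ 0 := by
      show iteratedDeriv 0 χ 0 = χ 0
      rw [iteratedDeriv_zero]
    show (A ^ (k - 1)) x = χ 0
    rw [hx, he]
end
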